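/- Let γ ≤ 1/L_f and let (y_t, z_t, x_t) be the iterates of dense VR-TOS, with dual iterate u_t = (y_t − z_t)/γ. Then for any (x, u) ∈ dom(g) × dom(h*), setting y = x + γu, and for any η > 0, with E the conditional expectation at iteration t and x* a minimizer of the primal objective: 2γ·E[L(x_t, u) − L(x, u_t)] + E‖y_{t+1} − y‖² ≤ ‖y_t − y‖² + 2γ²(1 + η)·E‖∇f_i(z_t) − ∇f_i(x*)‖² + 4γ²(1 + η⁻¹)·L_f·H_t, where f_i = ψ_i + ω. -/

import Mathlib

open Finset
open Topology Filter
open scoped RealInnerProductSpace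

noncomputable section

variable {p : ℕ}

local notation "V" => EuclideanSpace ℝ (Fin p)

lemma ereal_coe_sum {ι : Type*} (s : Finset ι) (f : ι → ℝ) :
    ((∑ i ∈ s, f i : ℝ) : EReal) = ∑ i ∈ s, ((f i : ℝ) : EReal) := by
  induction s using Finset.cons_induction with
  | empty => simp
  | cons a s ha ih => rw [Finset.sum_cons, Finset.sum_cons, EReal.coe_add, ih]

/-- limit helper -/
lemma nonneg_of_forall_small (A B : ℝ) (h : ∀ t : ℝ, 0 < t → t ≤ 1 → 0 ≤ A + t * B) : 0 ≤ A := by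
  by_contra hA
  push_neg at hA
  have hB : 0 < B := by
    have := h 1 one_pos le_rfl
    nlinarith
  set t := min 1 (-A / (2 * B)) with ht
  have ht0 : 0 < t := lt_min one_pos (div_pos (by linarith) (by linarith))
  have := h t ht0 (min_le_left _ _)
  have htB : t * B ≤ -A / 2 := by
    have : t ≤ -A / (2 * B) := min_le_right _ _
    calc t * B ≤ (-A / (2 * B)) * B := by nlinarith
    _ = -A / 2 := by field_simp
  linarith

/-- gradient of a linear functional -/
lemma hasGradientAt_inner_const (c x : V) : HasGradientAt (fun w => ⟪c, w⟫) c x := by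
  rw [hasGradientAt_iff_hasFDerivAt]
  exact (InnerProductSpace.toDual ℝ _ c).hasFDerivAt

lemma HasGradientAt.add' {f g : V → ℝ} {f' g' x : V} (hf : HasGradientAt f f' x)
    (hg : HasGradientAt g g' x) : HasGradientAt (fun w => f w + g w) (f' + g') x := by
  rw [hasGradientAt_iff_hasFDerivAt] at *
  rw [map_add]; exact hf.add hg

lemma HasGradientAt.sub' {f g : V → ℝ} {f' g' x : V} (hf : HasGradientAt f f' x)
    (hg : HasGradientAt g g' x) : HasGradientAt (fun w => f w - g w) (f' - g') x := by
  rw [hasGradientAt_iff_hasFDerivAt] at *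
  rw [map_sub]; exact hf.sub hg

/-- derivative along a line -/
lemma line_hasDerivAt {f : V → ℝ} {gf : V → V} (hdiff : ∀ x, HasGradientAt f (gf x) x)
    (x u : V) (t : ℝ) :
    HasDerivAt (fun s : ℝ => f (x + s • u)) ⟪gf (x + t • u), u⟫ t := by
  have h1 : HasDerivAt (fun s : ℝ => x + s • u) u t := by
    simpa using ((hasDerivAt_id t).smul_const u).const_add x
  have h2 := (hasGradientAt_iff_hasFDerivAt.1 (hdiff (x + t • u))).comp_hasDerivAt t h1
  simpa [InnerProductSpace.toDual_apply_apply, Function.comp_def] using h2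

/-- gradient inequality for convex functions -/
lemma convex_grad_ineq {f : V → ℝ} {gf : V → V} (hconv : ConvexOn ℝ Set.univ f)
    (hdiff : ∀ x, HasGradientAt f (gf x) x) (x y : V) :
    f x + ⟪gf x, y - x⟫ ≤ f y := by
  set u := y - x with hu
  have hD : HasDerivAt (fun s : ℝ => f (x + s • u)) ⟪gf x, u⟫ 0 := by
    have := line_hasDerivAt hdiff x u 0
    simpa using this
  have hslope : Filter.Tendsto (slope (fun s : ℝ => f (x + s • u)) 0) (𝓝[>] 0)
      (𝓝 ⟪gf x, u⟫) := by
    have := hasDerivAt_iff_tendsto_slope.1 hD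
    exact this.mono_left (nhdsWithin_mono _ (fun t ht => ne_of_gt ht))
  have hbound : ∀ᶠ t in 𝓝[>] (0:ℝ), slope (fun s : ℝ => f (x + s • u)) 0 t ≤ f y - f x := by
    filter_upwards [Ioc_mem_nhdsGT one_pos] with t ht
    have ht0 : 0 < t := ht.1
    have ht1 : t ≤ 1 := ht.2
    have hxtu : x + t • u = (1 - t) • x + t • y := by
      rw [hu]; module
    have hcv := hconv.2 (Set.mem_univ x) (Set.mem_univ y) (by linarith : (0:ℝ) ≤ 1 - t)
      ht0.le (by ring)
    rw [← hxtu] at hcv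
    simp only [smul_eq_mul] at hcv
    rw [slope_def_field]
    simp only [zero_smul, add_zero, sub_zero]
    rw [div_le_iff₀ ht0]
    nlinarith [hcv]
  have := le_of_tendsto hslope hbound
  linarith

/-- descent lemma -/
lemma descent_lemma {f : V → ℝ} {gf : V → V} {L : ℝ}
    (hdiff : ∀ x, HasGradientAt f (gf x) x)
    (hlip : ∀ a b, ‖gf a - gf b‖ ≤ L * ‖a - b‖) (x y : V) :
    f y ≤ f x + ⟪gf x, y - x⟫ + L / 2 * ‖y - x‖ ^ 2 := by
  set u := y - x with hu
  set ψ : ℝ → ℝ := fun t => f (x + t • u) - t * ⟪gf x, u⟫ - L * t ^ 2 / 2 * ‖u‖ ^ 2 with hψdef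
  have hψ : ∀ t, HasDerivAt ψ (⟪gf (x + t • u), u⟫ - ⟪gf x, u⟫ - L * t * ‖u‖ ^ 2) t := by
    intro t
    have h1 := line_hasDerivAt hdiff x u t
    have h2 : HasDerivAt (fun s : ℝ => s * ⟪gf x, u⟫) ⟪gf x, u⟫ t := by
      simpa using (hasDerivAt_id t).mul_const ⟪gf x, u⟫
    have h3 : HasDerivAt (fun s : ℝ => L * s ^ 2 / 2 * ‖u‖ ^ 2) (L * t * ‖u‖ ^ 2) t := by
      have h4 : HasDerivAt (fun s : ℝ => s ^ 2) (2 * t) t := by simpa using hasDerivAt_pow 2 t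
      exact (((h4.const_mul L).div_const 2).mul_const (‖u‖ ^ 2)).congr_deriv (by ring)
    exact (h1.sub h2).sub h3
  have hmono : AntitoneOn ψ (Set.Icc 0 1) := by
    apply antitoneOn_of_deriv_nonpos (convex_Icc 0 1)
    · exact fun t _ => ((hψ t).differentiableAt.continuousAt).continuousWithinAt
    · intro t _
      exact (hψ t).differentiableAt.differentiableWithinAt
    · intro t ht
      rw [interior_Icc] at ht
      rw [(hψ t).deriv]
      have hcs : ⟪gf (x + t • u) - gf x, u⟫ ≤ ‖gf (x + t • u) - gf x‖ * ‖u‖ :=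
        real_inner_le_norm _ _
      have hl : ‖gf (x + t • u) - gf x‖ ≤ L * (t * ‖u‖) := by
        have := hlip (x + t • u) x
        simpa [norm_smul, abs_of_pos ht.1] using this
      have hin : ⟪gf (x + t • u), u⟫ - ⟪gf x, u⟫ = ⟪gf (x + t • u) - gf x, u⟫ := by
        rw [inner_sub_left]
      rw [hin]
      nlinarith [norm_nonneg u, norm_nonneg (gf (x + t • u) - gf x)]
  have h01 := hmono (Set.mem_Icc.2 ⟨le_rfl, zero_le_one⟩) (Set.mem_Icc.2 ⟨zero_le_one, le_rfl⟩)
    zero_le_one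
  have h0 : ψ 0 = f x := by simp [hψdef]
  have h1 : ψ 1 = f y - ⟪gf x, u⟫ - L / 2 * ‖u‖ ^ 2 := by
    simp only [hψdef, one_smul, one_pow, one_mul, hu]
    rw [add_sub_cancel]
    ring_nf
  rw [h0, h1] at h01
  linarith

/-- cocoercivity-type bound: `‖∇f a − ∇f b‖² ≤ 2 L B_f(a,b)` -/
lemma grad_sq_le_bregman {f : V → ℝ} {gf : V → V} {L : ℝ} (hL : 0 < L)
    (hconv : ConvexOn ℝ Set.univ f)
    (hdiff : ∀ x, HasGradientAt f (gf x) x)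
    (hlip : ∀ a b, ‖gf a - gf b‖ ≤ L * ‖a - b‖) (a b : V) :
    ‖gf a - gf b‖ ^ 2 ≤ 2 * L * (f a - f b - ⟪gf b, a - b⟫) := by
  set φ : V → ℝ := fun w => f w - ⟪gf b, w⟫ with hφdef
  set gφ : V → V := fun w => gf w - gf b with hgφdef
  have hφdiff : ∀ w, HasGradientAt φ (gφ w) w := fun w =>
    (hdiff w).sub' (hasGradientAt_inner_const (gf b) w)
  have hφconv : ConvexOn ℝ Set.univ φ := by
    refine ⟨convex_univ, fun x _ y _ s t hs ht hst => ?_⟩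
    have := hconv.2 (Set.mem_univ x) (Set.mem_univ y) hs ht hst
    simp only [hφdef, smul_eq_mul, inner_add_right, real_inner_smul_right] at this ⊢
    nlinarith [this]
  have hφlip : ∀ u w, ‖gφ u - gφ w‖ ≤ L * ‖u - w‖ := by
    intro u w
    simpa [hgφdef, sub_sub_sub_cancel_right] using hlip u w
  -- φ has minimum at b since gφ b = 0
  have hmin : ∀ w, φ b ≤ φ w := by
    intro w
    have := convex_grad_ineq hφconv hφdiff b w
    simpa [hgφdef] using this
  -- evaluate descent at a - L⁻¹ • gφ a
  have hdes := descent_lemma (gf := gφ) hφdiff hφlip a (a - L⁻¹ • gφ a)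
  have hps : (a - L⁻¹ • gφ a) - a = -(L⁻¹ • gφ a) := by abel
  rw [hps] at hdes
  have hmb := hmin (a - L⁻¹ • gφ a)
  have hnorm : ‖-(L⁻¹ • gφ a)‖ ^ 2 = L⁻¹ ^ 2 * ‖gφ a‖ ^ 2 := by
    rw [norm_neg, norm_smul]
    simp [abs_of_pos (inv_pos.2 hL), mul_pow]
  have hinner : ⟪gφ a, -(L⁻¹ • gφ a)⟫ = -(L⁻¹ * ‖gφ a‖ ^ 2) := by
    rw [inner_neg_right, real_inner_smul_right, real_inner_self_eq_norm_sq]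
  rw [hnorm, hinner] at hdes
  have hkey : φ b ≤ φ a - 1 / (2 * L) * ‖gφ a‖ ^ 2 := by
    have hL' : L ≠ 0 := ne_of_gt hL
    have : L / 2 * (L⁻¹ ^ 2 * ‖gφ a‖ ^ 2) = 1 / (2 * L) * ‖gφ a‖ ^ 2 := by
      field_simp
    calc φ b ≤ φ (a - L⁻¹ • gφ a) := hmb
      _ ≤ φ a + -(L⁻¹ * ‖gφ a‖ ^ 2) + L / 2 * (L⁻¹ ^ 2 * ‖gφ a‖ ^ 2) := hdes
      _ = φ a - L⁻¹ * ‖gφ a‖ ^ 2 + 1 / (2 * L) * ‖gφ a‖ ^ 2 := by rw [this]; ring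
      _ ≤ φ a - 1 / (2 * L) * ‖gφ a‖ ^ 2 := by
          have : 1 / (2 * L) * ‖gφ a‖ ^ 2 ≤ L⁻¹ / 2 * ‖gφ a‖ ^ 2 + 0 := by
            rw [one_div, mul_inv]
            nlinarith [sq_nonneg ‖gφ a‖]
          nlinarith [sq_nonneg ‖gφ a‖, inv_pos.2 hL]
  have hφab : φ a - φ b = f a - f b - ⟪gf b, a - b⟫ := by
    simp only [hφdef, inner_sub_right]
    ring
  have : 1 / (2 * L) * ‖gφ a‖ ^ 2 ≤ φ a - φ b := by linarith
  rw [hφab] at this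
  have h2L : 0 < 2 * L := by linarith
  calc ‖gf a - gf b‖ ^ 2 = 2 * L * (1 / (2 * L) * ‖gφ a‖ ^ 2) := by
        field_simp [hgφdef]
        simp only [hgφdef]
    _ ≤ 2 * L * (f a - f b - ⟪gf b, a - b⟫) := by
        exact mul_le_mul_of_nonneg_left this (by linarith)
/-- proper, lower semicontinuous, convex extended-real function. -/
structure ProperLscConvex (g : EuclideanSpace ℝ (Fin p) → EReal) : Prop where
  proper : ∃ x, g x ≠ ⊤
  ne_bot : ∀ x, g x ≠ ⊥
  lsc : LowerSemicontinuous g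
  convex : ∀ x y : EuclideanSpace ℝ (Fin p), ∀ a b : ℝ, 0 ≤ a → 0 ≤ b → a + b = 1 →
    g (a • x + b • y) ≤ (a : EReal) * g x + (b : EReal) * g y

/-- The Bregman divergence of a differentiable convex function. -/
def bregman (f : EuclideanSpace ℝ (Fin p) → ℝ)
    (gradf : EuclideanSpace ℝ (Fin p) → EuclideanSpace ℝ (Fin p))
    (x y : EuclideanSpace ℝ (Fin p)) : ℝ :=
  f x - f y - ⟪gradf y, x - y⟫

/-- `z = prox_{γ g}(x)`. -/
def IsProx (γ : ℝ) (g : EuclideanSpace ℝ (Fin p) → EReal) (x z : EuclideanSpace ℝ (Fin p)) : Prop :=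
  ∀ w, g z + (((1 / (2 * γ)) * ‖x - z‖ ^ 2 : ℝ) : EReal)
      ≤ g w + (((1 / (2 * γ)) * ‖x - w‖ ^ 2 : ℝ) : EReal)

/-- Fenchel conjugate. -/
def fconj (g : EuclideanSpace ℝ (Fin p) → EReal) (u : EuclideanSpace ℝ (Fin p)) : EReal :=
  ⨆ x, ((⟪x, u⟫ : ℝ) : EReal) - g x

/-- The Lagrangian `L(x, u) = f(x) + g(x) + ⟨x, u⟩ − h*(u)`. -/
def Lagr (f : EuclideanSpace ℝ (Fin p) → ℝ) (g h : EuclideanSpace ℝ (Fin p) → EReal)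
    (x u : EuclideanSpace ℝ (Fin p)) : EReal :=
  ((f x : ℝ) : EReal) + g x + ((⟪x, u⟫ : ℝ) : EReal) - fconj h u


lemma prox_finite {g : EuclideanSpace ℝ (Fin p) → EReal} {γ : ℝ} {a z : V}
    (hg : ProperLscConvex g) (hprox : IsProx γ g a z) : ∃ r : ℝ, g z = (r : EReal) := by
  obtain ⟨x₀, hx₀⟩ := hg.proper
  have h := hprox x₀
  have hne : g z ≠ ⊤ := by
    intro htop
    rw [htop] at h
    have htle : (⊤ : EReal) ≤ g x₀ + ((1 / (2 * γ) * ‖a - x₀‖ ^ 2 : ℝ) : EReal) :=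
      le_trans (by rw [EReal.top_add_of_ne_bot (EReal.coe_ne_bot _)]) h
    exact absurd (top_le_iff.1 htle)
      (EReal.add_lt_top hx₀ (EReal.coe_ne_top _)).ne
  exact ⟨(g z).toReal, (EReal.coe_toReal hne (hg.ne_bot z)).symm⟩

lemma prox_subgrad {g : EuclideanSpace ℝ (Fin p) → EReal} {γ : ℝ} (hγ : 0 < γ) {a z : V}
    (hg : ProperLscConvex g) (hprox : IsProx γ g a z) (w : V) {gz gw : ℝ}
    (hgz : g z = (gz : EReal)) (hgw : g w = (gw : EReal)) :
    gz + γ⁻¹ * ⟪a - z, w - z⟫ ≤ gw := by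
  have key : ∀ t : ℝ, 0 < t → t ≤ 1 →
      0 ≤ (gw - gz - γ⁻¹ * ⟪a - z, w - z⟫) + t * (1 / (2 * γ) * ‖w - z‖ ^ 2) := by
    intro t ht0 ht1
    have hwt : z + t • (w - z) = (1 - t) • z + t • w := by module
    have hcv := hg.convex z w (1 - t) t (by linarith) ht0.le (by ring)
    rw [hgz, hgw] at hcv
    have hcv' : g ((1 - t) • z + t • w) ≤ (((1 - t) * gz + t * gw : ℝ) : EReal) := by
      rw [EReal.coe_add, EReal.coe_mul, EReal.coe_mul]
      exact hcv
    have hpx := hprox ((1 - t) • z + t • w)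
    rw [hgz] at hpx
    have hchain : ((gz + 1 / (2 * γ) * ‖a - z‖ ^ 2 : ℝ) : EReal)
        ≤ (((1 - t) * gz + t * gw + 1 / (2 * γ) * ‖a - ((1 - t) • z + t • w)‖ ^ 2 : ℝ) : EReal) := by
      rw [EReal.coe_add, EReal.coe_add]
      calc ((gz : ℝ) : EReal) + ((1 / (2 * γ) * ‖a - z‖ ^ 2 : ℝ) : EReal)
          ≤ g ((1 - t) • z + t • w) + ((1 / (2 * γ) * ‖a - ((1 - t) • z + t • w)‖ ^ 2 : ℝ) : EReal) := hpx
        _ ≤ (((1 - t) * gz + t * gw : ℝ) : EReal)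
            + ((1 / (2 * γ) * ‖a - ((1 - t) • z + t • w)‖ ^ 2 : ℝ) : EReal) :=
            add_le_add_left hcv' _
    rw [EReal.coe_le_coe_iff] at hchain
    have hexp : a - ((1 - t) • z + t • w) = (a - z) - t • (w - z) := by module
    have hnorm : ‖a - ((1 - t) • z + t • w)‖ ^ 2
        = ‖a - z‖ ^ 2 - 2 * t * ⟪a - z, w - z⟫ + t ^ 2 * ‖w - z‖ ^ 2 := by
      rw [hexp, norm_sub_sq_real, real_inner_smul_right, norm_smul]
      rw [Real.norm_eq_abs, abs_of_pos ht0]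
      ring
    rw [hnorm] at hchain
    have hγ' : γ ≠ 0 := ne_of_gt hγ
    have h2γ : 1 / (2 * γ) * (2 * t * ⟪a - z, w - z⟫) = t * (γ⁻¹ * ⟪a - z, w - z⟫) := by
      field_simp
    nlinarith [hchain]
  have := nonneg_of_forall_small _ _ key
  linarith

lemma prox_nonexpansive {g : EuclideanSpace ℝ (Fin p) → EReal} {γ : ℝ} (hγ : 0 < γ)
    {a b z₁ z₂ : V} (hg : ProperLscConvex g)
    (hp₁ : IsProx γ g a z₁) (hp₂ : IsProx γ g b z₂) : ‖z₁ - z₂‖ ≤ ‖a - b‖ := by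
  obtain ⟨g₁, hg₁⟩ := prox_finite hg hp₁
  obtain ⟨g₂, hg₂⟩ := prox_finite hg hp₂
  have h₁ := prox_subgrad hγ hg hp₁ z₂ hg₁ hg₂
  have h₂ := prox_subgrad hγ hg hp₂ z₁ hg₂ hg₁
  have hsum : γ⁻¹ * ⟪a - z₁, z₂ - z₁⟫ + γ⁻¹ * ⟪b - z₂, z₁ - z₂⟫ ≤ 0 := by linarith
  have hγi : 0 < γ⁻¹ := inv_pos.2 hγ
  have hkey : ⟪a - z₁, z₂ - z₁⟫ + ⟪b - z₂, z₁ - z₂⟫ ≤ 0 := by nlinarith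
  have hexp : ⟪a - z₁, z₂ - z₁⟫ + ⟪b - z₂, z₁ - z₂⟫
      = ‖z₁ - z₂‖ ^ 2 - ⟪a - b, z₁ - z₂⟫ := by
    have e1 : (a - z₁ : V) = (a - b) - (z₁ - z₂) + (b - z₂) := by abel
    have e2 : (z₂ - z₁ : V) = -(z₁ - z₂) := by abel
    rw [e1, e2, inner_neg_right, inner_add_left, inner_sub_left,
      real_inner_self_eq_norm_sq]
    ring
  rw [hexp] at hkey
  have hcs : ⟪a - b, z₁ - z₂⟫ ≤ ‖a - b‖ * ‖z₁ - z₂‖ := real_inner_le_norm _ _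
  rcases eq_or_lt_of_le (norm_nonneg (z₁ - z₂)) with h0 | h0
  · rw [← h0]; exact norm_nonneg _
  · have : ‖z₁ - z₂‖ ^ 2 ≤ ‖a - b‖ * ‖z₁ - z₂‖ := by linarith
    nlinarith

/-- the key inner-product identity for the TOS step -/
lemma key_identity (γ : ℝ) (d e s uu vi : V) :
    2 * ⟪-d - e - γ • vi, d + s⟫ + 2 * γ * ⟪d, uu⟫ + 2 * ⟪s, e⟫
      + ‖e + s - γ • uu + d‖ ^ 2
    = ‖e + s - γ • uu‖ ^ 2 + 2 * γ * ⟪-vi, d + s⟫ - ‖d‖ ^ 2 := by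
  simp only [← real_inner_self_eq_norm_sq, inner_sub_left, inner_sub_right, inner_add_left,
    inner_add_right, inner_neg_left, inner_neg_right, real_inner_smul_left, real_inner_smul_right]
  linear_combination (2:ℝ) * real_inner_comm e s + real_inner_comm d e + real_inner_comm d s
    - γ * real_inner_comm d uu - γ * real_inner_comm e uu - γ * real_inner_comm s uu
    + real_inner_comm d e + real_inner_comm d s - γ * real_inner_comm d uu
    + 3 * real_inner_comm e d + real_inner_comm s d - γ * real_inner_comm uu e
    - γ * real_inner_comm uu s - γ * real_inner_comm uu d

/-- Young-type inequality for squared norms -/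
lemma norm_add_sq_le_eta (a b : V) {η : ℝ} (hη : 0 < η) :
    ‖a + b‖ ^ 2 ≤ (1 + η) * ‖a‖ ^ 2 + (1 + η⁻¹) * ‖b‖ ^ 2 := by
  have hexp : ‖a + b‖ ^ 2 = ‖a‖ ^ 2 + 2 * ⟪a, b⟫ + ‖b‖ ^ 2 := norm_add_sq_real a b
  have h0 : (0:ℝ) ≤ ‖η • a - b‖ ^ 2 := sq_nonneg _
  have h1 : ‖η • a - b‖ ^ 2 = η ^ 2 * ‖a‖ ^ 2 - 2 * η * ⟪a, b⟫ + ‖b‖ ^ 2 := by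
    rw [norm_sub_sq_real, real_inner_smul_left, norm_smul, Real.norm_eq_abs, abs_of_pos hη]
    ring
  have hinv : η⁻¹ * η = 1 := inv_mul_cancel₀ (ne_of_gt hη)
  rw [h1] at h0
  have h2 : 2 * ⟪a, b⟫ ≤ η * ‖a‖ ^ 2 + η⁻¹ * ‖b‖ ^ 2 := by
    have h3 : η⁻¹ * (η ^ 2 * ‖a‖ ^ 2 - 2 * η * ⟪a, b⟫ + ‖b‖ ^ 2) ≥ 0 :=
      mul_nonneg (inv_pos.2 hη).le h0
    nlinarith [h3, hinv]
  nlinarith [hexp, h2]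

/-- variance bound: deviations from the mean -/
lemma sum_sq_dev_le {n : ℕ} (w : Fin n → V) (wb : V) (hwb : (n : ℝ) • wb = ∑ i, w i) :
    ∑ i, ‖w i - wb‖ ^ 2 ≤ ∑ i, ‖w i‖ ^ 2 := by
  have hexp : ∀ i, ‖w i - wb‖ ^ 2 = ‖w i‖ ^ 2 - 2 * ⟪w i, wb⟫ + ‖wb‖ ^ 2 := fun i =>
    norm_sub_sq_real _ _
  have hsum : ∑ i, ‖w i - wb‖ ^ 2
      = ∑ i, ‖w i‖ ^ 2 - 2 * ⟪∑ i, w i, wb⟫ + (n : ℝ) * ‖wb‖ ^ 2 := by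
    rw [sum_inner]
    simp only [hexp]
    rw [Finset.sum_add_distrib, Finset.sum_sub_distrib, Finset.sum_const, Finset.card_univ,
      Fintype.card_fin, ← Finset.mul_sum, nsmul_eq_mul]
  have hin : ⟪∑ i, w i, wb⟫ = (n : ℝ) * ‖wb‖ ^ 2 := by
    rw [← hwb, real_inner_smul_left, real_inner_self_eq_norm_sq]
  rw [hsum, hin]
  nlinarith [sq_nonneg ‖wb‖, Nat.cast_nonneg (α := ℝ) n, mul_nonneg (Nat.cast_nonneg (α := ℝ) n) (sq_nonneg ‖wb‖)]
set_option maxHeartbeats 2000000 in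
/-- saddle point recursive inequality, dense VR-TOS. -/
theorem saddle_point_recursive_inequality
    {n : ℕ} (hn : 0 < n)
    (ψ : Fin n → EuclideanSpace ℝ (Fin p) → ℝ)
    (gradψ : Fin n → EuclideanSpace ℝ (Fin p) → EuclideanSpace ℝ (Fin p))
    (Lψ : ℝ)
    (hψconv : ∀ i, ConvexOn ℝ Set.univ (ψ i))
    (hψdiff : ∀ i x, HasGradientAt (ψ i) (gradψ i x) x)
    (hψlip : ∀ i x y, ‖gradψ i x - gradψ i y‖ ≤ Lψ * ‖x - y‖)
    (ω : EuclideanSpace ℝ (Fin p) → ℝ)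
    (gradω : EuclideanSpace ℝ (Fin p) → EuclideanSpace ℝ (Fin p))
    (Lω : ℝ)
    (hωconv : ConvexOn ℝ Set.univ ω)
    (hωdiff : ∀ x, HasGradientAt ω (gradω x) x)
    (hωlip : ∀ x y, ‖gradω x - gradω y‖ ≤ Lω * ‖x - y‖)
    (Lf : ℝ) (hLf : Lf = Lψ + Lω) (hLfpos : 0 < Lf)
    -- summands `f_i = ψ_i + ω` and the full smooth term `f`
    (fj : Fin n → EuclideanSpace ℝ (Fin p) → ℝ)
    (hfj : ∀ j x, fj j x = ψ j x + ω x)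
    (gradfj : Fin n → EuclideanSpace ℝ (Fin p) → EuclideanSpace ℝ (Fin p))
    (hgradfj : ∀ j x, gradfj j x = gradψ j x + gradω x)
    (f : EuclideanSpace ℝ (Fin p) → ℝ)
    (hf : ∀ x, f x = (n : ℝ)⁻¹ * ∑ j, ψ j x + ω x)
    (gradf : EuclideanSpace ℝ (Fin p) → EuclideanSpace ℝ (Fin p))
    (hgradf : ∀ x, gradf x = (n : ℝ)⁻¹ • ∑ j, gradψ j x + gradω x)
    -- the nonsmooth terms with their proximal operators, and the qualification condition
    (g h : EuclideanSpace ℝ (Fin p) → EReal)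
    (hg : ProperLscConvex g) (hh : ProperLscConvex h)
    (hqual : (intrinsicInterior ℝ {x | g x ≠ ⊤} ∩ intrinsicInterior ℝ {x | h x ≠ ⊤}).Nonempty)
    (γ : ℝ) (hγpos : 0 < γ) (hγ : γ ≤ 1 / Lf)
    (proxg proxh : EuclideanSpace ℝ (Fin p) → EuclideanSpace ℝ (Fin p))
    (hproxg : ∀ x, IsProx γ g x (proxg x))
    (hproxh : ∀ x, IsProx γ h x (proxh x))
    -- a minimizer `x*` of the primal objective
    (xstar : EuclideanSpace ℝ (Fin p))
    (hxstar : ∀ x, ((f xstar : ℝ) : EReal) + g xstar + h xstar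
        ≤ ((f x : ℝ) : EReal) + g x + h x)
    -- current state: `y_t`, `z_t = prox_{γh}(y_t)`, dual iterate `u_t = (y_t − z_t)/γ`,
    -- stored gradients `α`, memory-Lyapunov values `m`, and `H_t`
    (y z : EuclideanSpace ℝ (Fin p)) (hz : z = proxh y)
    (ut : EuclideanSpace ℝ (Fin p)) (hut : ut = γ⁻¹ • (y - z))
    (α : Fin n → EuclideanSpace ℝ (Fin p)) (m : Fin n → ℝ)
    (hstruct : ∀ j, m j = 1 / (2 * Lf) * ‖α j - gradψ j xstar‖ ^ 2 ∨
      ∃ φ, α j = gradψ j φ ∧ m j = bregman (fj j) (gradfj j) φ xstar)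
    (Ht : ℝ) (hHt : Ht = (n : ℝ)⁻¹ * ∑ j, m j)
    -- the gradient estimator, prox step and next iterate (as functions of the sampled index i)
    (v : Fin n → EuclideanSpace ℝ (Fin p))
    (hv : ∀ i, v i = gradψ i z - α i + (n : ℝ)⁻¹ • ∑ j, α j + gradω z)
    (x : Fin n → EuclideanSpace ℝ (Fin p))
    (hx : ∀ i, x i = proxg (2 • z - y - γ • v i))
    (y' : Fin n → EuclideanSpace ℝ (Fin p))
    (hy' : ∀ i, y' i = y + x i - z) :
    ∀ xx uu : EuclideanSpace ℝ (Fin p), g xx ≠ ⊤ → fconj h uu ≠ ⊤ →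
      ∀ η : ℝ, 0 < η →
        (((2 * γ : ℝ)) : EReal)
            * ((((n : ℝ)⁻¹ : ℝ) : EReal) * ∑ i, (Lagr f g h (x i) uu - Lagr f g h xx ut))
          + (((n : ℝ)⁻¹ * ∑ i, ‖y' i - (xx + γ • uu)‖ ^ 2 : ℝ) : EReal)
        ≤ ((‖y - (xx + γ • uu)‖ ^ 2
            + 2 * γ ^ 2 * (1 + η) * ((n : ℝ)⁻¹ * ∑ i, ‖gradfj i z - gradfj i xstar‖ ^ 2)
            + 4 * γ ^ 2 * (1 + η⁻¹) * Lf * Ht : ℝ) : EReal) := by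
  intro xx uu hgxx hhuu η hη
  have hnR : (0:ℝ) < n := Nat.cast_pos.2 hn
  have hγne : γ ≠ 0 := ne_of_gt hγpos
  have hproxz : IsProx γ h y z := hz ▸ hproxh y
  obtain ⟨hzr, hhz⟩ := prox_finite hh hproxz
  have hproxi : ∀ i, IsProx γ g (2 • z - y - γ • v i) (x i) := fun i => (hx i) ▸ hproxg _
  have hGfin : ∀ i, ∃ r : ℝ, g (x i) = (r : EReal) := fun i => prox_finite hg (hproxi i)
  choose G hG using hGfin
  set Gxx := (g xx).toReal with hGxxdef
  have hGxx : g xx = (Gxx : EReal) := (EReal.coe_toReal hgxx (hg.ne_bot xx)).symm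
  -- value of the conjugate at the dual iterate
  have hinzut : ∀ w : EuclideanSpace ℝ (Fin p),
      ⟪w, ut⟫ - ⟪z, ut⟫ = γ⁻¹ * ⟪y - z, w - z⟫ := by
    intro w
    rw [hut, real_inner_smul_right, real_inner_smul_right, ← mul_sub, ← inner_sub_left,
      real_inner_comm]
  have hfut : fconj h ut = ((⟪z, ut⟫ - hzr : ℝ) : EReal) := by
    apply le_antisymm
    · apply iSup_le
      intro w
      rcases eq_or_ne (h w) ⊤ with hw | hw
      · rw [hw, EReal.sub_top]
        exact bot_le
      · have hwr : h w = (((h w).toReal : ℝ) : EReal) := (EReal.coe_toReal hw (hh.ne_bot w)).symm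
        rw [hwr]
        have hsub := prox_subgrad hγpos hh hproxz w hhz hwr
        have h2 := hinzut w
        norm_cast
        linarith
    · have hle := le_iSup (fun x => ((⟪x, ut⟫ : ℝ) : EReal) - h x) z
      rw [hhz, ← EReal.coe_sub] at hle
      exact hle
  -- value of the conjugate at uu
  have hfuu_ge : ((⟪z, uu⟫ - hzr : ℝ) : EReal) ≤ fconj h uu := by
    have hle := le_iSup (fun x => ((⟪x, uu⟫ : ℝ) : EReal) - h x) z
    rw [hhz, ← EReal.coe_sub] at hle
    exact hle
  have hfuu_nebot : fconj h uu ≠ ⊥ := ne_bot_of_le_ne_bot (EReal.coe_ne_bot _) hfuu_ge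
  set Hs := (fconj h uu).toReal with hHsdef
  have hHs : fconj h uu = (Hs : EReal) := (EReal.coe_toReal hhuu hfuu_nebot).symm
  have hHsge : ⟪z, uu⟫ - hzr ≤ Hs := EReal.coe_le_coe_iff.1 (hHs ▸ hfuu_ge)
  -- the real-valued Lagrangian gap
  set Δ : Fin n → ℝ := fun i =>
    (f (x i) + G i + ⟪x i, uu⟫ - Hs) - (f xx + Gxx + ⟪xx, ut⟫ - (⟪z, ut⟫ - hzr)) with hΔ
  have hLagr : ∀ i, Lagr f g h (x i) uu - Lagr f g h xx ut = ((Δ i : ℝ) : EReal) := by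
    intro i
    unfold Lagr
    rw [hG i, hGxx, hfut, hHs, hΔ]
    norm_cast
  -- reduce to a real inequality
  rw [Finset.sum_congr rfl (fun i _ => hLagr i), ← ereal_coe_sum, ← EReal.coe_mul,
    ← EReal.coe_mul, ← EReal.coe_add, EReal.coe_le_coe_iff]
  -- basic facts about `f`
  have hfeq : f = fun x => (n : ℝ)⁻¹ * ∑ j, ψ j x + ω x := funext hf
  have hfdiff : ∀ w, HasGradientAt f (gradf w) w := by
    intro w
    have h1 : HasFDerivAt (fun x : EuclideanSpace ℝ (Fin p) => ∑ j, ψ j x)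
        (∑ j, (InnerProductSpace.toDual ℝ (EuclideanSpace ℝ (Fin p))) (gradψ j w)) w :=
      HasFDerivAt.fun_sum (fun j _ => hasGradientAt_iff_hasFDerivAt.1 (hψdiff j w))
    have h2 := h1.const_mul ((n : ℝ)⁻¹)
    have h3 := hasGradientAt_iff_hasFDerivAt.1 (hωdiff w)
    have h4 := h2.add h3
    rw [hfeq, hgradf w, hasGradientAt_iff_hasFDerivAt]
    rw [map_add, map_smul, map_sum]
    exact h4
  have hfconv : ConvexOn ℝ Set.univ f := by
    refine ⟨convex_univ, fun a _ b _ s t hs ht hst => ?_⟩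
    simp only [smul_eq_mul]
    rw [hf, hf, hf]
    have hsum : ∑ j, ψ j (s • a + t • b) ≤ ∑ j, (s * ψ j a + t * ψ j b) :=
      Finset.sum_le_sum (fun j _ => by
        simpa [smul_eq_mul] using (hψconv j).2 trivial trivial hs ht hst)
    rw [Finset.sum_add_distrib, ← Finset.mul_sum, ← Finset.mul_sum] at hsum
    have hω := hωconv.2 (Set.mem_univ a) (Set.mem_univ b) hs ht hst
    simp only [smul_eq_mul] at hω
    have hmul := mul_le_mul_of_nonneg_left hsum (inv_nonneg.2 hnR.le)
    nlinarith [hmul, hω]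
  have hflip : ∀ a b : EuclideanSpace ℝ (Fin p), ‖gradf a - gradf b‖ ≤ Lf * ‖a - b‖ := by
    intro a b
    rw [hgradf a, hgradf b]
    have e : ((n : ℝ)⁻¹ • ∑ j, gradψ j a + gradω a) - ((n : ℝ)⁻¹ • ∑ j, gradψ j b + gradω b)
        = (n : ℝ)⁻¹ • (∑ j, (gradψ j a - gradψ j b)) + (gradω a - gradω b) := by
      rw [Finset.sum_sub_distrib]
      module
    rw [e]
    have hsb : ∑ j, ‖gradψ j a - gradψ j b‖ ≤ (n : ℝ) * (Lψ * ‖a - b‖) := by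
      calc ∑ j, ‖gradψ j a - gradψ j b‖ ≤ ∑ _j : Fin n, Lψ * ‖a - b‖ :=
            Finset.sum_le_sum (fun j _ => hψlip j a b)
        _ = (n : ℝ) * (Lψ * ‖a - b‖) := by
            rw [Finset.sum_const, Finset.card_univ, Fintype.card_fin, nsmul_eq_mul]
    calc ‖(n : ℝ)⁻¹ • (∑ j, (gradψ j a - gradψ j b)) + (gradω a - gradω b)‖
        ≤ ‖(n : ℝ)⁻¹ • (∑ j, (gradψ j a - gradψ j b))‖ + ‖gradω a - gradω b‖ :=
          norm_add_le _ _
      _ ≤ (n : ℝ)⁻¹ * ∑ j, ‖gradψ j a - gradψ j b‖ + Lω * ‖a - b‖ := by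
          rw [norm_smul, Real.norm_eq_abs, abs_of_pos (inv_pos.2 hnR)]
          exact add_le_add (mul_le_mul_of_nonneg_left (norm_sum_le _ _) (inv_pos.2 hnR).le)
            (hωlip a b)
      _ ≤ (n : ℝ)⁻¹ * ((n : ℝ) * (Lψ * ‖a - b‖)) + Lω * ‖a - b‖ :=
          add_le_add_left (mul_le_mul_of_nonneg_left hsb (inv_pos.2 hnR).le) _
      _ = Lf * ‖a - b‖ := by
          rw [hLf]
          field_simp
  -- prox split point
  set xhat := proxg (2 • z - y - γ • gradf z) with hxhat
  have hnonexp : ∀ i, ‖x i - xhat‖ ≤ γ * ‖gradf z - v i‖ := by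
    intro i
    have h1 := prox_nonexpansive hγpos hg (hproxi i) (hproxg (2 • z - y - γ • gradf z))
    have e : (2 • z - y - γ • v i) - (2 • z - y - γ • gradf z) = γ • (gradf z - v i) := by
      module
    rw [e, norm_smul, Real.norm_eq_abs, abs_of_pos hγpos] at h1
    exact h1
  have hsplit : ∀ i, ⟪gradf z - v i, x i - xx⟫
      ≤ γ * ‖gradf z - v i‖ ^ 2 + ⟪gradf z - v i, xhat - xx⟫ := by
    intro i
    have e : ⟪gradf z - v i, x i - xx⟫
        = ⟪gradf z - v i, x i - xhat⟫ + ⟪gradf z - v i, xhat - xx⟫ := by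
      rw [← inner_add_right]
      congr 1
      module
    have hcs := real_inner_le_norm (gradf z - v i) (x i - xhat)
    have hne := mul_le_mul_of_nonneg_left (hnonexp i) (norm_nonneg (gradf z - v i))
    rw [e]
    nlinarith [hcs, hne]
  -- per-index inequality
  have keyi : ∀ i, 2 * γ * Δ i + ‖y' i - (xx + γ • uu)‖ ^ 2
      ≤ ‖y - (xx + γ • uu)‖ ^ 2 + 2 * γ ^ 2 * ‖gradf z - v i‖ ^ 2
        + 2 * γ * ⟪gradf z - v i, xhat - xx⟫ + (γ * Lf - 1) * ‖x i - z‖ ^ 2 := by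
    intro i
    have hA : f (x i) - f xx ≤ ⟪gradf z, x i - xx⟫ + Lf / 2 * ‖x i - z‖ ^ 2 := by
      have hd := descent_lemma hfdiff hflip z (x i)
      have hc := convex_grad_ineq hfconv hfdiff z xx
      have e : ⟪gradf z, x i - z⟫ - ⟪gradf z, xx - z⟫ = ⟪gradf z, x i - xx⟫ := by
        rw [← inner_sub_right]
        congr 1
        module
      linarith
    have hB : G i - Gxx ≤ γ⁻¹ * ⟪(2 • z - y - γ • v i) - x i, x i - xx⟫ := by
      have hs := prox_subgrad hγpos hg (hproxi i) xx (hG i) hGxx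
      have e : ⟪(2 • z - y - γ • v i) - x i, xx - x i⟫
          = -⟪(2 • z - y - γ • v i) - x i, x i - xx⟫ := by
        rw [← inner_neg_right]
        congr 1
        module
      rw [e] at hs
      have e2 : γ⁻¹ * -⟪(2 • z - y - γ • v i) - x i, x i - xx⟫
          = -(γ⁻¹ * ⟪(2 • z - y - γ • v i) - x i, x i - xx⟫) := by ring
      rw [e2] at hs
      linarith
    have hΔle : Δ i ≤ ⟪gradf z, x i - xx⟫ + Lf / 2 * ‖x i - z‖ ^ 2
        + γ⁻¹ * ⟪(2 • z - y - γ • v i) - x i, x i - xx⟫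
        + ⟪x i, uu⟫ - ⟪xx, ut⟫ + ⟪z, ut⟫ - ⟪z, uu⟫ := by
      simp only [hΔ]
      linarith [hA, hB, hHsge]
    -- the exact algebraic identity
    have hid := key_identity γ (x i - z) (y - z) (z - xx) uu (v i)
    have en1 : y' i - (xx + γ • uu) = (y - z) + (z - xx) - γ • uu + (x i - z) := by
      rw [hy' i]
      module
    have en2 : y - (xx + γ • uu) = (y - z) + (z - xx) - γ • uu := by module
    have b1 : ⟪x i - z, uu⟫ = ⟪x i, uu⟫ - ⟪z, uu⟫ := inner_sub_left _ _ _
    have b2 : ⟪z - xx, y - z⟫ = ⟪z, y - z⟫ - ⟪xx, y - z⟫ := inner_sub_left _ _ _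
    have b3 : ∀ w : EuclideanSpace ℝ (Fin p), γ * ⟪w, ut⟫ = ⟪w, y - z⟫ := by
      intro w
      rw [hut, real_inner_smul_right]
      field_simp
    have b7 : ⟪(2 • z - y - γ • v i) - x i, x i - xx⟫
        = ⟪-(x i - z) - (y - z) - γ • (v i), (x i - z) + (z - xx)⟫ := by
      congr 1 <;> module
    have b6 : ⟪-(v i), (x i - z) + (z - xx)⟫ = -⟪v i, x i - xx⟫ := by
      rw [inner_neg_left, show (x i - z) + (z - xx) = x i - xx by module]
    have b4 : ⟪gradf z - v i, x i - xx⟫ = ⟪gradf z, x i - xx⟫ - ⟪v i, x i - xx⟫ :=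
      inner_sub_left _ _ _
    have bγ : γ * γ⁻¹ = 1 := mul_inv_cancel₀ hγne
    have E : 2 * γ * (⟪gradf z, x i - xx⟫ + Lf / 2 * ‖x i - z‖ ^ 2
          + γ⁻¹ * ⟪(2 • z - y - γ • v i) - x i, x i - xx⟫
          + ⟪x i, uu⟫ - ⟪xx, ut⟫ + ⟪z, ut⟫ - ⟪z, uu⟫)
          + ‖y' i - (xx + γ • uu)‖ ^ 2
        = ‖y - (xx + γ • uu)‖ ^ 2 + 2 * γ * ⟪gradf z - v i, x i - xx⟫
          + (γ * Lf - 1) * ‖x i - z‖ ^ 2 := by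
      rw [en1, en2, b7, b4]
      linear_combination hid - 2 * γ * b1 - 2 * b2 + 2 * b3 z - 2 * b3 xx + 2 * γ * b6
        + 2 * ⟪-(x i - z) - (y - z) - γ • (v i), (x i - z) + (z - xx)⟫ * bγ
    have h2γ : (0:ℝ) ≤ 2 * γ := by linarith
    have hmul := mul_le_mul_of_nonneg_left hΔle h2γ
    have hsp := mul_le_mul_of_nonneg_left (hsplit i) h2γ
    have e3 : 2 * γ * (γ * ‖gradf z - v i‖ ^ 2 + ⟪gradf z - v i, xhat - xx⟫)
        = 2 * γ ^ 2 * ‖gradf z - v i‖ ^ 2 + 2 * γ * ⟪gradf z - v i, xhat - xx⟫ := by ring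
    calc 2 * γ * Δ i + ‖y' i - (xx + γ • uu)‖ ^ 2
        ≤ 2 * γ * (⟪gradf z, x i - xx⟫ + Lf / 2 * ‖x i - z‖ ^ 2
            + γ⁻¹ * ⟪(2 • z - y - γ • v i) - x i, x i - xx⟫
            + ⟪x i, uu⟫ - ⟪xx, ut⟫ + ⟪z, ut⟫ - ⟪z, uu⟫) + ‖y' i - (xx + γ • uu)‖ ^ 2 :=
          add_le_add_left hmul _
      _ = ‖y - (xx + γ • uu)‖ ^ 2 + 2 * γ * ⟪gradf z - v i, x i - xx⟫
            + (γ * Lf - 1) * ‖x i - z‖ ^ 2 := E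
      _ ≤ ‖y - (xx + γ • uu)‖ ^ 2 + 2 * γ ^ 2 * ‖gradf z - v i‖ ^ 2
            + 2 * γ * ⟪gradf z - v i, xhat - xx⟫ + (γ * Lf - 1) * ‖x i - z‖ ^ 2 := by
          linarith [hsp, e3]
  -- the stochastic estimator is unbiased
  have hsum0 : ∑ i, (gradf z - v i) = 0 := by
    have hterm : ∀ i : Fin n, gradf z - v i
        = ((n : ℝ)⁻¹ • ∑ j, gradψ j z - (n : ℝ)⁻¹ • ∑ j, α j) - (gradψ i z - α i) := by
      intro i
      rw [hgradf z, hv i]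
      module
    have hns : ∀ w : EuclideanSpace ℝ (Fin p), n • ((n : ℝ)⁻¹ • w) = w := fun w => by
      rw [← Nat.cast_smul_eq_nsmul ℝ, smul_smul, mul_inv_cancel₀ (ne_of_gt hnR), one_smul]
    rw [Finset.sum_congr rfl (fun i _ => hterm i)]
    simp only [Finset.sum_sub_distrib, Finset.sum_const, Finset.card_univ, Fintype.card_fin]
    rw [hns, hns]
    abel
  -- variance bound
  set W : Fin n → EuclideanSpace ℝ (Fin p) := fun i =>
    (gradfj i z - gradfj i xstar) + (gradψ i xstar - α i) with hW
  set Wb : EuclideanSpace ℝ (Fin p) := (n : ℝ)⁻¹ • ∑ j, W j with hWbdef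
  have hWi : ∀ i, W i = (gradψ i z - α i) + (gradω z - gradω xstar) := by
    intro i
    simp only [hW, hgradfj]
    module
  have hWb : Wb = ((n : ℝ)⁻¹ • ∑ j, gradψ j z - (n : ℝ)⁻¹ • ∑ j, α j)
      + (gradω z - gradω xstar) := by
    rw [hWbdef, Finset.sum_congr rfl (fun i _ => hWi i), Finset.sum_add_distrib,
      Finset.sum_sub_distrib, Finset.sum_const, Finset.card_univ, Fintype.card_fin,
      ← Nat.cast_smul_eq_nsmul ℝ, smul_add, smul_sub, smul_smul,
      inv_mul_cancel₀ (ne_of_gt hnR), one_smul]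
  have hWid : ∀ i, gradf z - v i = Wb - W i := by
    intro i
    rw [hgradf z, hv i, hWb, hWi i]
    module
  have hWbs : (n : ℝ) • Wb = ∑ j, W j := by
    rw [hWbdef, smul_smul, mul_inv_cancel₀ (ne_of_gt hnR), one_smul]
  have hvar : ∑ i, ‖gradf z - v i‖ ^ 2 ≤ ∑ i, ‖W i‖ ^ 2 := by
    have he : ∀ i : Fin n, ‖gradf z - v i‖ ^ 2 = ‖W i - Wb‖ ^ 2 := by
      intro i
      rw [hWid i, norm_sub_rev]
    rw [Finset.sum_congr rfl (fun i _ => he i)]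
    exact sum_sq_dev_le W Wb hWbs
  have hη' : ∀ i, ‖W i‖ ^ 2 ≤ (1 + η) * ‖gradfj i z - gradfj i xstar‖ ^ 2
      + (1 + η⁻¹) * ‖gradψ i xstar - α i‖ ^ 2 := fun i =>
    norm_add_sq_le_eta _ _ hη
  -- memory bound
  have hmem : ∀ j, ‖gradψ j xstar - α j‖ ^ 2 ≤ 2 * Lf * m j := by
    intro j
    have hfjconv : ConvexOn ℝ Set.univ (fj j) := by
      refine ⟨convex_univ, fun a _ b _ s t hs ht hst => ?_⟩
      simp only [smul_eq_mul]
      rw [hfj, hfj, hfj]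
      have h1 := (hψconv j).2 (Set.mem_univ a) (Set.mem_univ b) hs ht hst
      have h2 := hωconv.2 (Set.mem_univ a) (Set.mem_univ b) hs ht hst
      simp only [smul_eq_mul] at h1 h2
      linarith
    have hfjdiff : ∀ w, HasGradientAt (fj j) (gradfj j w) w := by
      intro w
      have := (hψdiff j w).add' (hωdiff w)
      rw [show fj j = fun x => ψ j x + ω x from funext (hfj j), hgradfj j w]
      exact this
    rcases hstruct j with hcase | ⟨φ, hα, hm⟩
    · rw [norm_sub_rev, hcase]
      rw [show 2 * Lf * (1 / (2 * Lf) * ‖α j - gradψ j xstar‖ ^ 2)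
          = ‖α j - gradψ j xstar‖ ^ 2 by field_simp]
    · have hbreg : 0 ≤ bregman (fj j) (gradfj j) φ xstar := by
        unfold bregman
        have := convex_grad_ineq hfjconv hfjdiff xstar φ
        linarith
      rw [hα, hm, norm_sub_rev]
      rcases eq_or_ne (gradψ j φ) (gradψ j xstar) with he | he
      · rw [he, sub_self, norm_zero]
        nlinarith [hbreg, hLfpos]
      · have h0 : 0 < ‖gradψ j φ - gradψ j xstar‖ := by
          rw [norm_pos_iff, sub_ne_zero]
          exact he
        have hnz : 0 < ‖φ - xstar‖ := by
          rcases eq_or_lt_of_le (norm_nonneg (φ - xstar)) with h1 | h1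
          · exfalso
            have hz0 : φ - xstar = 0 := norm_eq_zero.1 h1.symm
            have hφx : φ = xstar := by rwa [sub_eq_zero] at hz0
            exact he (by rw [hφx])
          · exact h1
        have hLψpos : 0 < Lψ := by nlinarith [hψlip j φ xstar]
        have hLωnn : 0 ≤ Lω := by nlinarith [hωlip φ xstar, norm_nonneg (gradω φ - gradω xstar)]
        have h1 := grad_sq_le_bregman hLψpos (hψconv j) (hψdiff j) (hψlip j) φ xstar
        have hψnn : 0 ≤ ψ j φ - ψ j xstar - ⟪gradψ j xstar, φ - xstar⟫ := by
          have := convex_grad_ineq (hψconv j) (hψdiff j) xstar φ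
          linarith
        have hωnn : 0 ≤ ω φ - ω xstar - ⟪gradω xstar, φ - xstar⟫ := by
          have := convex_grad_ineq hωconv hωdiff xstar φ
          linarith
        have hbsum : bregman (fj j) (gradfj j) φ xstar
            = (ψ j φ - ψ j xstar - ⟪gradψ j xstar, φ - xstar⟫)
              + (ω φ - ω xstar - ⟪gradω xstar, φ - xstar⟫) := by
          unfold bregman
          rw [hfj, hfj, hgradfj, inner_add_left]
          ring
        rw [hbsum]
        nlinarith [h1, hψnn, hωnn, hLf]
  -- assemble everything
  have hsumkey : ∑ i, (2 * γ * Δ i + ‖y' i - (xx + γ • uu)‖ ^ 2)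
      ≤ ∑ i, (‖y - (xx + γ • uu)‖ ^ 2 + 2 * γ ^ 2 * ‖gradf z - v i‖ ^ 2
        + 2 * γ * ⟪gradf z - v i, xhat - xx⟫ + (γ * Lf - 1) * ‖x i - z‖ ^ 2) :=
    Finset.sum_le_sum (fun i _ => keyi i)
  have hL : ∑ i, (2 * γ * Δ i + ‖y' i - (xx + γ • uu)‖ ^ 2)
      = 2 * γ * ∑ i, Δ i + ∑ i, ‖y' i - (xx + γ • uu)‖ ^ 2 := by
    rw [Finset.sum_add_distrib, ← Finset.mul_sum]
  have hR : ∑ i, (‖y - (xx + γ • uu)‖ ^ 2 + 2 * γ ^ 2 * ‖gradf z - v i‖ ^ 2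
        + 2 * γ * ⟪gradf z - v i, xhat - xx⟫ + (γ * Lf - 1) * ‖x i - z‖ ^ 2)
      = (n : ℝ) * ‖y - (xx + γ • uu)‖ ^ 2 + 2 * γ ^ 2 * ∑ i, ‖gradf z - v i‖ ^ 2
        + 2 * γ * ⟪∑ i, (gradf z - v i), xhat - xx⟫
        + (γ * Lf - 1) * ∑ i, ‖x i - z‖ ^ 2 := by
    rw [Finset.sum_add_distrib, Finset.sum_add_distrib, Finset.sum_add_distrib,
      Finset.sum_const, Finset.card_univ, Fintype.card_fin, nsmul_eq_mul,
      ← Finset.mul_sum, ← Finset.mul_sum, ← Finset.mul_sum, sum_inner]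
  rw [hsum0, inner_zero_left] at hR
  have hdrop : (γ * Lf - 1) * ∑ i, ‖x i - z‖ ^ 2 ≤ 0 := by
    have h1 : γ * Lf - 1 ≤ 0 := by
      have h2 : γ * Lf ≤ (1 / Lf) * Lf := mul_le_mul_of_nonneg_right hγ hLfpos.le
      rw [one_div, inv_mul_cancel₀ (ne_of_gt hLfpos)] at h2
      linarith
    have h2 : (0:ℝ) ≤ ∑ i, ‖x i - z‖ ^ 2 :=
      Finset.sum_nonneg (fun i _ => sq_nonneg _)
    have h3 := mul_le_mul_of_nonneg_right h1 h2
    simpa using h3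
  have hvar2 : ∑ i, ‖gradf z - v i‖ ^ 2
      ≤ (1 + η) * ∑ i, ‖gradfj i z - gradfj i xstar‖ ^ 2
        + (1 + η⁻¹) * (2 * Lf * ∑ j, m j) := by
    have hb : ∑ i, ‖W i‖ ^ 2 ≤ ∑ i, ((1 + η) * ‖gradfj i z - gradfj i xstar‖ ^ 2
        + (1 + η⁻¹) * (2 * Lf * m i)) := by
      apply Finset.sum_le_sum
      intro i _
      have h1 := hη' i
      have h2 := hmem i
      have h3 : (0:ℝ) ≤ 1 + η⁻¹ := by positivity
      nlinarith [mul_le_mul_of_nonneg_left h2 h3]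
    rw [Finset.sum_add_distrib, ← Finset.mul_sum, ← Finset.mul_sum] at hb
    have hc : ∑ i, 2 * Lf * m i = 2 * Lf * ∑ j, m j := by
      rw [← Finset.mul_sum]
    rw [hc] at hb
    linarith [hvar, hb]
  have hbig : 2 * γ * ∑ i, Δ i + ∑ i, ‖y' i - (xx + γ • uu)‖ ^ 2
      ≤ (n : ℝ) * ‖y - (xx + γ • uu)‖ ^ 2
        + 2 * γ ^ 2 * ((1 + η) * ∑ i, ‖gradfj i z - gradfj i xstar‖ ^ 2
          + (1 + η⁻¹) * (2 * Lf * ∑ j, m j)) := by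
    have h4 : (0:ℝ) ≤ 2 * γ ^ 2 := by positivity
    have h5 := mul_le_mul_of_nonneg_left hvar2 h4
    rw [hL, hR] at hsumkey
    linarith [hsumkey, hdrop, h5]
  have hfinal := mul_le_mul_of_nonneg_left hbig (inv_nonneg.2 hnR.le)
  calc 2 * γ * ((n : ℝ)⁻¹ * ∑ i, Δ i) + (n : ℝ)⁻¹ * ∑ i, ‖y' i - (xx + γ • uu)‖ ^ 2
      = (n : ℝ)⁻¹ * (2 * γ * ∑ i, Δ i + ∑ i, ‖y' i - (xx + γ • uu)‖ ^ 2) := by ring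
    _ ≤ (n : ℝ)⁻¹ * ((n : ℝ) * ‖y - (xx + γ • uu)‖ ^ 2
        + 2 * γ ^ 2 * ((1 + η) * ∑ i, ‖gradfj i z - gradfj i xstar‖ ^ 2
          + (1 + η⁻¹) * (2 * Lf * ∑ j, m j))) := hfinal
    _ = ‖y - (xx + γ • uu)‖ ^ 2
        + 2 * γ ^ 2 * (1 + η) * ((n : ℝ)⁻¹ * ∑ i, ‖gradfj i z - gradfj i xstar‖ ^ 2)
        + 4 * γ ^ 2 * (1 + η⁻¹) * Lf * Ht := by
        rw [hHt]
        field_simp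
        ring
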